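/- For all φ, θ ∈ S(ℝ), the smooth function F(x, y) = W(φ, θ)(x/2, y/2) on ℝ² satisfies the intertwining identity (H̃_L F)(x, y) = W(H₀φ, θ)(x/2, y/2) for all (x, y) ∈ ℝ², where H̃_L = −(∂_x² + ∂_y²) + i(x∂_y − y∂_x) + (1/4)(x² + y²) is the Landau Hamiltonian and H₀ = −d²/dx² + x² is the harmonic oscillator Hamiltonian. -/

import Mathlib

open MeasureTheory Complex
open scoped ComplexConjugate Real

noncomputable section

/-- The cross-Wigner transform (one dimension):
`W(φ,ψ)(x,ξ) = (2π)⁻¹ ∫ e^{-iξt} φ(x+t/2) conj(ψ(x−t/2)) dt`. -/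
def crossWigner1 (φ ψ : ℝ → ℂ) (x ξ : ℝ) : ℂ :=
  ((2 * π)⁻¹ : ℝ) *
    ∫ t : ℝ, Complex.exp (-(Complex.I * ξ * t)) * φ (x + t / 2) * conj (ψ (x - t / 2))

/-- Partial derivative in the first variable. -/
def pdx (f : ℝ → ℝ → ℂ) (x y : ℝ) : ℂ := deriv (fun u => f u y) x

/-- Partial derivative in the second variable. -/
def pdy (f : ℝ → ℝ → ℂ) (x y : ℝ) : ℂ := deriv (fun v => f x v) y

/-- The Landau Hamiltonian
`H̃_L F = −(∂ₓ²F + ∂ᵧ²F) + i(x ∂ᵧF − y ∂ₓF) + (1/4)(x² + y²)F`. -/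
def landauOp (f : ℝ → ℝ → ℂ) (x y : ℝ) : ℂ :=
  -(pdx (pdx f) x y + pdy (pdy f) x y)
    + Complex.I * (x * pdy f x y - y * pdx f x y)
    + (((x ^ 2 + y ^ 2) / 4 : ℝ) : ℂ) * f x y

/-- The harmonic oscillator Hamiltonian `H₀φ = −φ'' + x²φ`. -/
def harmOsc (φ : ℝ → ℂ) (x : ℝ) : ℂ := -deriv (deriv φ) x + (x : ℂ) ^ 2 * φ x


section Stmt14AuxSection
open Metric

namespace Stmt14Aux

abbrev Df (f : SchwartzMap ℝ ℂ) : SchwartzMap ℝ ℂ := SchwartzMap.derivCLM ℝ ℂ f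

/-- The master integrand. -/
def Jint (f g : SchwartzMap ℝ ℂ) (j : ℕ) (x y t : ℝ) : ℂ :=
  (t : ℂ) ^ j * Complex.exp (-(Complex.I * ((y / 2 : ℝ) : ℂ) * (t : ℂ)))
    * f ((x + t) / 2) * conj (g ((x - t) / 2))

/-- The master integral. -/
def J (f g : SchwartzMap ℝ ℂ) (j : ℕ) (x y : ℝ) : ℂ := ∫ t : ℝ, Jint f g j x y t

lemma Jint_norm (f g : SchwartzMap ℝ ℂ) (j : ℕ) (x y t : ℝ) :
    ‖Jint f g j x y t‖ = |t| ^ j * ‖f ((x + t) / 2)‖ * ‖g ((x - t) / 2)‖ := by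
  unfold Jint
  rw [norm_mul, norm_mul, norm_mul]
  have h1 : ‖(t : ℂ) ^ j‖ = |t| ^ j := by
    rw [norm_pow, Complex.norm_real, Real.norm_eq_abs]
  have h2 : ‖Complex.exp (-(Complex.I * ((y / 2 : ℝ) : ℂ) * (t : ℂ)))‖ = 1 := by
    rw [Complex.norm_exp]
    simp
  have h3 : ‖conj (g ((x - t) / 2))‖ = ‖g ((x - t) / 2)‖ := RCLike.norm_conj _
  rw [h1, h2, h3, mul_one]

lemma Jint_continuous (f g : SchwartzMap ℝ ℂ) (j : ℕ) (x y : ℝ) :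
    Continuous (fun t => Jint f g j x y t) := by
  unfold Jint
  refine (((Complex.continuous_ofReal.pow j).mul
      (Complex.continuous_exp.comp (by continuity))).mul
      (f.continuous.comp (by continuity))).mul
      (continuous_star.comp (g.continuous.comp (by continuity)))

lemma decay_bound (g : SchwartzMap ℝ ℂ) (n : ℕ) :
    ∃ C : ℝ, 0 < C ∧ ∀ v : ℝ, ‖g v‖ * (1 + |v|) ^ n ≤ C := by
  obtain ⟨C0, hC00, hC0⟩ := g.decay 0 0
  obtain ⟨Cn, hCn0, hCn⟩ := g.decay n 0
  refine ⟨2 ^ n * (C0 + Cn), by positivity, fun v => ?_⟩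
  have h0 := hC0 v
  have hn := hCn v
  simp only [pow_zero, one_mul, norm_iteratedFDeriv_zero, Real.norm_eq_abs] at h0 hn
  have h1 : (1 + |v|) ^ n ≤ 2 ^ n * (1 + |v| ^ n) := by
    rcases le_total (|v|) 1 with h | h
    · calc (1 + |v|) ^ n ≤ 2 ^ n := by
            apply pow_le_pow_left₀ (by positivity) (by linarith)
        _ ≤ 2 ^ n * (1 + |v| ^ n) := by
            have : (0:ℝ) ≤ |v| ^ n := by positivity
            nlinarith [pow_pos (show (0:ℝ) < 2 by norm_num) n]
    · calc (1 + |v|) ^ n ≤ (2 * |v|) ^ n := by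
            apply pow_le_pow_left₀ (by positivity) (by linarith)
        _ = 2 ^ n * |v| ^ n := mul_pow 2 (|v|) n
        _ ≤ 2 ^ n * (1 + |v| ^ n) := by
            have h2 : (0:ℝ) ≤ (2:ℝ) ^ n := by positivity
            nlinarith [pow_nonneg (abs_nonneg v) n]
  have hgv : (0:ℝ) ≤ ‖g v‖ := norm_nonneg _
  calc ‖g v‖ * (1 + |v|) ^ n ≤ ‖g v‖ * (2 ^ n * (1 + |v| ^ n)) := by
        apply mul_le_mul_of_nonneg_left h1 hgv
    _ = 2 ^ n * (‖g v‖ + |v| ^ n * ‖g v‖) := by ring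
    _ ≤ 2 ^ n * (C0 + Cn) := by
        have h2 : (0:ℝ) ≤ (2:ℝ) ^ n := by positivity
        have h0' : ‖g v‖ ≤ C0 := by simpa using h0
        nlinarith

lemma Jint_bound (f g : SchwartzMap ℝ ℂ) (j : ℕ) (x₀ : ℝ) :
    ∃ K : ℝ, 0 ≤ K ∧ ∀ (y t : ℝ), ∀ x ∈ ball x₀ (1:ℝ),
      ‖Jint f g j x y t‖ ≤ K * ((1 + |t - x₀|) ^ 2)⁻¹ := by
  obtain ⟨Cf, hCf0, hCf⟩ := f.decay 0 0
  obtain ⟨Cg, hCg0, hCg⟩ := decay_bound g (j + 2)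
  refine ⟨Cf * Cg * 2 ^ (j + 2) * (1 + |x₀|) ^ j, by positivity, ?_⟩
  intro y t x hx
  rw [Jint_norm]
  rw [mem_ball, Real.dist_eq] at hx
  set u := (x + t) / 2
  set v := (x - t) / 2
  set A := 1 + |t - x₀| with hA
  have hA1 : (1:ℝ) ≤ A := by simp [hA, abs_nonneg]
  have hA0 : (0:ℝ) < A := by linarith
  -- bound on f
  have hf' : ‖f u‖ ≤ Cf := by
    have := hCf u
    simpa [norm_iteratedFDeriv_zero] using this
  -- bound on g
  have hvA : A / 2 ≤ 1 + |v| := by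
    have h1 : |t - x₀| ≤ |x - t| + 1 := by
      have := abs_sub_le t x x₀
      have h2 : |x - x₀| ≤ 1 := le_of_lt hx
      have h3 : |t - x| = |x - t| := abs_sub_comm t x
      linarith [abs_sub_le t x x₀]
    have h4 : |v| = |x - t| / 2 := by
      rw [show v = (x - t)/2 from rfl, abs_div]
      norm_num
    rw [h4, hA]
    linarith
  have hg' : ‖g v‖ ≤ Cg * 2 ^ (j + 2) / A ^ (j + 2) := by
    have h1 := hCg v
    have h2 : (A / 2) ^ (j + 2) ≤ (1 + |v|) ^ (j + 2) :=
      pow_le_pow_left₀ (by positivity) hvA _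
    have h3 : (0:ℝ) < (A / 2) ^ (j + 2) := by positivity
    have h5 : ‖g v‖ * (A / 2) ^ (j + 2) ≤ Cg := by
      calc ‖g v‖ * (A / 2) ^ (j + 2) ≤ ‖g v‖ * (1 + |v|) ^ (j + 2) := by
            apply mul_le_mul_of_nonneg_left h2 (norm_nonneg _)
        _ ≤ Cg := h1
    rw [div_pow] at h5
    have h6 : (0:ℝ) < (2:ℝ) ^ (j+2) := by positivity
    rw [le_div_iff₀ (by positivity)]
    calc ‖g v‖ * A ^ (j + 2) = (‖g v‖ * (A ^ (j+2) / 2 ^ (j+2))) * 2 ^ (j+2) := by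
          field_simp
      _ ≤ Cg * 2 ^ (j + 2) := by
          apply mul_le_mul_of_nonneg_right h5 (le_of_lt h6)
  -- bound on |t|^j
  have ht : |t| ^ j ≤ (1 + |x₀|) ^ j * A ^ j := by
    rw [← mul_pow]
    apply pow_le_pow_left₀ (abs_nonneg t)
    have h1 : |t| ≤ |x₀| + |t - x₀| := by
      have := abs_sub_abs_le_abs_sub t x₀
      have h2 := abs_add_le x₀ (t - x₀)
      calc |t| = |x₀ + (t - x₀)| := by ring_nf
        _ ≤ |x₀| + |t - x₀| := abs_add_le _ _
    have h2 : (0:ℝ) ≤ |x₀| := abs_nonneg _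
    have h3 : (0:ℝ) ≤ |t - x₀| := abs_nonneg _
    nlinarith
  calc |t| ^ j * ‖f u‖ * ‖g v‖
      ≤ ((1 + |x₀|) ^ j * A ^ j) * Cf * (Cg * 2 ^ (j + 2) / A ^ (j + 2)) := by
        apply mul_le_mul (mul_le_mul ht hf' (norm_nonneg _) (by positivity)) hg'
          (norm_nonneg _) (by positivity)
    _ = Cf * Cg * 2 ^ (j + 2) * (1 + |x₀|) ^ j * (A ^ 2)⁻¹ := by
        have hAne : A ≠ 0 := ne_of_gt hA0
        field_simp
        ring

lemma integrable_bound (x₀ K : ℝ) :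
    Integrable (fun t : ℝ => K * ((1 + |t - x₀|) ^ 2)⁻¹) := by
  have h0' : Integrable (fun t : ℝ => (1 + ‖t‖) ^ (-(2:ℝ))) :=
    integrable_one_add_norm (E := ℝ) (r := 2) (by simp [Module.finrank_self])
  have h0 : Integrable (fun t : ℝ => ((1 + ‖t‖) ^ (2:ℝ))⁻¹) := by
    have : (fun t : ℝ => (1 + ‖t‖) ^ (-(2:ℝ)))
        = fun t : ℝ => ((1 + ‖t‖) ^ (2:ℝ))⁻¹ := by
      funext t
      rw [Real.rpow_neg (by positivity)]
    rwa [this] at h0'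
  have h1 : Integrable (fun t : ℝ => ((1 + ‖t - x₀‖) ^ (2:ℝ))⁻¹) := h0.comp_sub_right x₀
  have h2 : (fun t : ℝ => ((1 + ‖t - x₀‖) ^ (2:ℝ))⁻¹)
      = fun t : ℝ => ((1 + |t - x₀|) ^ (2:ℕ))⁻¹ := by
    funext t
    rw [Real.norm_eq_abs]
    norm_cast
  rw [h2] at h1
  simpa using h1.const_mul K

lemma Jint_integrable (f g : SchwartzMap ℝ ℂ) (j : ℕ) (x y : ℝ) :
    Integrable (fun t => Jint f g j x y t) := by
  obtain ⟨K, hK0, hK⟩ := Jint_bound f g j x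
  exact (integrable_bound x K).mono'
    (Jint_continuous f g j x y).aestronglyMeasurable
    (Filter.Eventually.of_forall fun t => hK y t x (mem_ball_self one_pos))

end Stmt14Aux

namespace Stmt14Aux

lemma hasDerivAt_comp_affine (f : SchwartzMap ℝ ℂ) (c : ℝ) (x : ℝ) :
    HasDerivAt (fun x : ℝ => f ((x + c) / 2)) ((1/2 : ℂ) * (Df f) ((x + c) / 2)) x := by
  have hu : HasDerivAt (fun x : ℝ => (x + c) / 2) ((1:ℝ)/2) x := by
    simpa using ((hasDerivAt_id x).add_const c).div_const 2
  have := (f.differentiableAt.hasDerivAt (x := (x + c)/2)).scomp_of_eq _ hu rfl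
  have h2 : HasDerivAt (fun x : ℝ => f ((x + c) / 2)) (((1:ℝ)/2) • deriv f ((x + c)/2)) x := this
  rw [Complex.real_smul] at h2
  simpa [SchwartzMap.derivCLM_apply] using h2

lemma hasDerivAt_comp_affine' (g : SchwartzMap ℝ ℂ) (c : ℝ) (x : ℝ) :
    HasDerivAt (fun x : ℝ => conj (g ((x - c) / 2)))
      ((1/2 : ℂ) * conj ((Df g) ((x - c) / 2))) x := by
  have hv : HasDerivAt (fun x : ℝ => (x - c) / 2) ((1:ℝ)/2) x := by
    simpa using ((hasDerivAt_id x).sub_const c).div_const 2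
  have h1 := (g.differentiableAt.hasDerivAt (x := (x - c)/2)).scomp_of_eq _ hv rfl
  have h2 := h1.star
  have h3 : HasDerivAt (fun x : ℝ => conj (g ((x - c) / 2)))
      (star (((1:ℝ)/2) • deriv g ((x - c)/2))) x := h2
  have h4 : star (((1:ℝ)/2) • deriv g ((x - c)/2))
      = (1/2 : ℂ) * conj ((Df g) ((x - c) / 2)) := by
    rw [star_smul, Complex.real_smul, SchwartzMap.derivCLM_apply]
    push_cast
    rw [Complex.star_def]
    simp
  rwa [h4] at h3

lemma hasDerivAt_Jint_x (f g : SchwartzMap ℝ ℂ) (j : ℕ) (y t x : ℝ) :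
    HasDerivAt (fun x => Jint f g j x y t)
      ((1/2 : ℂ) * Jint (Df f) g j x y t + (1/2 : ℂ) * Jint f (Df g) j x y t) x := by
  have hf1 := hasDerivAt_comp_affine f t x
  have hg1 := hasDerivAt_comp_affine' g t x
  set C : ℂ := (t : ℂ) ^ j * Complex.exp (-(Complex.I * ((y / 2 : ℝ) : ℂ) * (t : ℂ))) with hC
  have h1 : HasDerivAt (fun x : ℝ => C * f ((x + t) / 2))
      (C * ((1/2 : ℂ) * (Df f) ((x + t) / 2))) x := hf1.const_mul C
  have h2 : HasDerivAt (fun x : ℝ => C * f ((x + t) / 2) * conj (g ((x - t) / 2))) _ x := h1.mul hg1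
  have heq : (fun x : ℝ => C * f ((x + t) / 2) * conj (g ((x - t) / 2)))
      = fun x => Jint f g j x y t := by
    funext x; rw [Jint, hC]
  rw [heq] at h2
  convert h2 using 1
  unfold Jint
  rw [hC]
  ring

lemma hasDerivAt_Jint_y (f g : SchwartzMap ℝ ℂ) (j : ℕ) (x t y : ℝ) :
    HasDerivAt (fun y => Jint f g j x y t)
      (-(Complex.I / 2) * Jint f g (j + 1) x y t) y := by
  have hlin : HasDerivAt (fun y : ℝ => (-(Complex.I * (t:ℂ)) / 2) * (y : ℂ))
      (-(Complex.I * (t:ℂ)) / 2) y := by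
    simpa using (Complex.ofRealCLM.hasDerivAt (x := y)).const_mul (-(Complex.I * (t:ℂ)) / 2)
  have hexp : HasDerivAt (fun y : ℝ => Complex.exp (-(Complex.I * ((y / 2 : ℝ) : ℂ) * (t : ℂ))))
      (Complex.exp (-(Complex.I * ((y / 2 : ℝ) : ℂ) * (t : ℂ))) * (-(Complex.I * (t:ℂ)) / 2)) y := by
    have hfun : (fun y : ℝ => Complex.exp (-(Complex.I * ((y / 2 : ℝ) : ℂ) * (t : ℂ))))
        = fun y : ℝ => Complex.exp ((-(Complex.I * (t:ℂ)) / 2) * (y : ℂ)) := by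
      funext y; congr 1; push_cast; ring
    have hpt : -(Complex.I * ((y / 2 : ℝ) : ℂ) * (t : ℂ)) = (-(Complex.I * (t:ℂ)) / 2) * (y : ℂ) := by
      push_cast; ring
    rw [hfun, hpt]
    exact hlin.cexp
  have h1 : HasDerivAt (fun y : ℝ => Jint f g j x y t)
      ((t : ℂ) ^ j * (Complex.exp (-(Complex.I * ((y / 2 : ℝ) : ℂ) * (t : ℂ))) * (-(Complex.I * (t:ℂ)) / 2))
        * f ((x + t) / 2) * conj (g ((x - t) / 2))) y := by
    have h2 := ((hexp.const_mul ((t : ℂ) ^ j)).mul_const (f ((x + t) / 2))).mul_const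
      (conj (g ((x - t) / 2)))
    exact h2
  convert h1 using 1
  unfold Jint
  rw [pow_succ]
  ring

lemma hasDerivAt_Jint_t (f g : SchwartzMap ℝ ℂ) (x y t : ℝ) :
    HasDerivAt (fun t => Jint f g 0 x y t)
      (-(Complex.I * ((y / 2 : ℝ) : ℂ)) * Jint f g 0 x y t
        + (1/2 : ℂ) * Jint (Df f) g 0 x y t - (1/2 : ℂ) * Jint f (Df g) 0 x y t) t := by
  have hlin : HasDerivAt (fun t : ℝ => -(Complex.I * ((y / 2 : ℝ) : ℂ)) * (t : ℂ))
      (-(Complex.I * ((y / 2 : ℝ) : ℂ))) t := by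
    simpa using (Complex.ofRealCLM.hasDerivAt (x := t)).const_mul (-(Complex.I * ((y / 2 : ℝ) : ℂ)))
  have hexp : HasDerivAt (fun t : ℝ => Complex.exp (-(Complex.I * ((y / 2 : ℝ) : ℂ) * (t : ℂ))))
      (Complex.exp (-(Complex.I * ((y / 2 : ℝ) : ℂ) * (t : ℂ))) * (-(Complex.I * ((y / 2 : ℝ) : ℂ)))) t := by
    have hfun : (fun t : ℝ => Complex.exp (-(Complex.I * ((y / 2 : ℝ) : ℂ) * (t : ℂ))))
        = fun t : ℝ => Complex.exp (-(Complex.I * ((y / 2 : ℝ) : ℂ)) * (t : ℂ)) := by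
      funext t; congr 1; ring
    have hpt : -(Complex.I * ((y / 2 : ℝ) : ℂ) * (t : ℂ))
        = -(Complex.I * ((y / 2 : ℝ) : ℂ)) * (t : ℂ) := by ring
    rw [hfun, hpt]
    exact hlin.cexp
  have hf1 : HasDerivAt (fun t : ℝ => f ((x + t) / 2)) (((1:ℝ)/2) • (Df f) ((x + t) / 2)) t := by
    have hu : HasDerivAt (fun t : ℝ => (x + t) / 2) ((1:ℝ)/2) t := by
      simpa using ((hasDerivAt_id t).const_add x).div_const 2
    have := (f.differentiableAt.hasDerivAt (x := (x + t)/2)).scomp_of_eq _ hu rfl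
    exact this
  have hg1 : HasDerivAt (fun t : ℝ => conj (g ((x - t) / 2)))
      ((-(1:ℝ)/2) • conj ((Df g) ((x - t) / 2))) t := by
    have hv : HasDerivAt (fun t : ℝ => (x - t) / 2) (-(1:ℝ)/2) t := by
      simpa using ((hasDerivAt_id t).const_sub x).div_const 2
    have h1 := (g.differentiableAt.hasDerivAt (x := (x - t)/2)).scomp_of_eq _ hv rfl
    have h2 := h1.star
    have h3 : HasDerivAt (fun t : ℝ => conj (g ((x - t) / 2)))
        (star ((-(1:ℝ)/2) • deriv g ((x - t)/2))) t := h2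
    simpa [star_smul, SchwartzMap.derivCLM_apply, Complex.star_def] using h3
  have h2 : HasDerivAt (fun t : ℝ => Complex.exp (-(Complex.I * ((y / 2 : ℝ) : ℂ) * (t : ℂ)))
      * f ((x + t) / 2) * conj (g ((x - t) / 2))) _ t := (hexp.mul hf1).mul hg1
  have heq : (fun t : ℝ => Complex.exp (-(Complex.I * ((y / 2 : ℝ) : ℂ) * (t : ℂ)))
      * f ((x + t) / 2) * conj (g ((x - t) / 2))) = fun t => Jint f g 0 x y t := by
    funext t; rw [Jint]; rw [pow_zero, one_mul]
  rw [heq] at h2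
  convert h2 using 1
  unfold Jint
  simp only [pow_zero, one_mul, Complex.real_smul, Pi.mul_apply]
  push_cast
  ring

end Stmt14Aux

namespace Stmt14Aux

lemma J_def (f g : SchwartzMap ℝ ℂ) (j : ℕ) (x y : ℝ) :
    J f g j x y = ∫ t : ℝ, Jint f g j x y t := rfl

lemma half_norm (A B : ℂ) : ‖(1/2:ℂ) * A + (1/2:ℂ) * B‖ ≤ (1/2) * ‖A‖ + (1/2) * ‖B‖ := by
  calc ‖(1/2:ℂ) * A + (1/2:ℂ) * B‖ ≤ ‖(1/2:ℂ) * A‖ + ‖(1/2:ℂ) * B‖ := norm_add_le _ _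
    _ = (1/2) * ‖A‖ + (1/2) * ‖B‖ := by
        rw [norm_mul, norm_mul]
        norm_num

lemma hasDerivAt_J_x (f g : SchwartzMap ℝ ℂ) (j : ℕ) (x y : ℝ) :
    HasDerivAt (fun x' => J f g j x' y)
      ((1/2:ℂ) * J (Df f) g j x y + (1/2:ℂ) * J f (Df g) j x y) x := by
  obtain ⟨K₁, hK₁0, hK₁⟩ := Jint_bound (Df f) g j x
  obtain ⟨K₂, hK₂0, hK₂⟩ := Jint_bound f (Df g) j x
  have main := hasDerivAt_integral_of_dominated_loc_of_deriv_le
    (F := fun x' t => Jint f g j x' y t)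
    (F' := fun x' t => (1/2:ℂ) * Jint (Df f) g j x' y t + (1/2:ℂ) * Jint f (Df g) j x' y t)
    (x₀ := x) (s := ball x 1)
    (bound := fun t => (1/2) * (K₁ * ((1 + |t - x|)^2)⁻¹) + (1/2) * (K₂ * ((1 + |t - x|)^2)⁻¹))
    (ball_mem_nhds x one_pos)
    (Filter.Eventually.of_forall fun x' => (Jint_continuous f g j x' y).aestronglyMeasurable)
    (Jint_integrable f g j x y)
    (((continuous_const.mul (Jint_continuous (Df f) g j x y)).add
      (continuous_const.mul (Jint_continuous f (Df g) j x y))).aestronglyMeasurable)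
    (Filter.Eventually.of_forall fun t x' hx' => by
      calc ‖(1/2:ℂ) * Jint (Df f) g j x' y t + (1/2:ℂ) * Jint f (Df g) j x' y t‖
          ≤ (1/2) * ‖Jint (Df f) g j x' y t‖ + (1/2) * ‖Jint f (Df g) j x' y t‖ :=
            half_norm _ _
        _ ≤ (1/2) * (K₁ * ((1 + |t - x|)^2)⁻¹) + (1/2) * (K₂ * ((1 + |t - x|)^2)⁻¹) := by
            have h1 := hK₁ y t x' hx'
            have h2 := hK₂ y t x' hx'
            have : (0:ℝ) ≤ ((1 + |t - x|)^2)⁻¹ := by positivity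
            nlinarith)
    (by
      have := (integrable_bound x K₁).const_mul (1/2:ℝ)
      have h2 := (integrable_bound x K₂).const_mul (1/2:ℝ)
      exact this.add h2)
    (Filter.Eventually.of_forall fun t x' hx' => hasDerivAt_Jint_x f g j y t x')
  have h := main.2
  have heq : (∫ t : ℝ, ((1/2:ℂ) * Jint (Df f) g j x y t + (1/2:ℂ) * Jint f (Df g) j x y t))
      = (1/2:ℂ) * J (Df f) g j x y + (1/2:ℂ) * J f (Df g) j x y := by
    rw [integral_add ((Jint_integrable (Df f) g j x y).const_mul _)
      ((Jint_integrable f (Df g) j x y).const_mul _), integral_const_mul, integral_const_mul,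
      J_def, J_def]
  rw [heq] at h
  exact h

lemma hasDerivAt_J_y (f g : SchwartzMap ℝ ℂ) (j : ℕ) (x y : ℝ) :
    HasDerivAt (fun y' => J f g j x y')
      (-(Complex.I/2) * J f g (j+1) x y) y := by
  obtain ⟨K, hK0, hK⟩ := Jint_bound f g (j+1) x
  have main := hasDerivAt_integral_of_dominated_loc_of_deriv_le
    (F := fun y' t => Jint f g j x y' t)
    (F' := fun y' t => -(Complex.I/2) * Jint f g (j+1) x y' t)
    (x₀ := y) (s := ball y 1)
    (bound := fun t => (1/2) * (K * ((1 + |t - x|)^2)⁻¹))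
    (ball_mem_nhds y one_pos)
    (Filter.Eventually.of_forall fun y' => (Jint_continuous f g j x y').aestronglyMeasurable)
    (Jint_integrable f g j x y)
    ((continuous_const.mul (Jint_continuous f g (j+1) x y)).aestronglyMeasurable)
    (Filter.Eventually.of_forall fun t y' hy' => by
      have h1 := hK y' t x (mem_ball_self one_pos)
      have h2 : ‖-(Complex.I/2) * Jint f g (j+1) x y' t‖ = (1/2) * ‖Jint f g (j+1) x y' t‖ := by
        rw [norm_mul]
        norm_num
      rw [h2]
      have : (0:ℝ) ≤ ((1 + |t - x|)^2)⁻¹ := by positivity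
      nlinarith)
    (by simpa [mul_assoc] using (integrable_bound x K).const_mul (1/2:ℝ))
    (Filter.Eventually.of_forall fun t y' hy' => hasDerivAt_Jint_y f g j x t y')
  have h := main.2
  have heq : (∫ t : ℝ, (-(Complex.I/2) * Jint f g (j+1) x y t))
      = -(Complex.I/2) * J f g (j+1) x y := by
    rw [integral_const_mul, J_def]
  rw [heq] at h
  exact h

lemma key (f g : SchwartzMap ℝ ℂ) (x y : ℝ) :
    Complex.I * ((y:ℂ)/2) * J f g 0 x y
      = (1/2:ℂ) * J (Df f) g 0 x y - (1/2:ℂ) * J f (Df g) 0 x y := by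
  have i0 := Jint_integrable f g 0 x y
  have ia := Jint_integrable (Df f) g 0 x y
  have ib := Jint_integrable f (Df g) 0 x y
  have hz := integral_eq_zero_of_hasDerivAt_of_integrable
    (f' := fun t => -(Complex.I * ((y/2:ℝ):ℂ)) * Jint f g 0 x y t
      + (1/2:ℂ) * Jint (Df f) g 0 x y t - (1/2:ℂ) * Jint f (Df g) 0 x y t)
    (fun t => hasDerivAt_Jint_t f g x y t)
    (((i0.const_mul _).add (ia.const_mul _)).sub (ib.const_mul _))
    i0
  have iA1 : Integrable (fun t => -(Complex.I * ((y/2:ℝ):ℂ)) * Jint f g 0 x y t) volume :=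
    i0.const_mul _
  have iA2 : Integrable (fun t => (1/2:ℂ) * Jint (Df f) g 0 x y t) volume := ia.const_mul _
  have iA : Integrable (fun t => -(Complex.I * ((y/2:ℝ):ℂ)) * Jint f g 0 x y t
      + (1/2:ℂ) * Jint (Df f) g 0 x y t) volume := iA1.add iA2
  have iC : Integrable (fun t => (1/2:ℂ) * Jint f (Df g) 0 x y t) volume := ib.const_mul _
  rw [integral_sub iA iC, integral_add iA1 iA2,
    integral_const_mul, integral_const_mul, integral_const_mul, ← J_def, ← J_def, ← J_def] at hz
  have hcast : ((y/2:ℝ):ℂ) = (y:ℂ)/2 := by push_cast; ring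
  rw [hcast] at hz
  linear_combination (-1 : ℂ) * hz

end Stmt14Aux

namespace Stmt14Aux

lemma cw_eq (f g : SchwartzMap ℝ ℂ) (a b : ℝ) :
    crossWigner1 (⇑f) (⇑g) (a/2) (b/2) = (((2*π)⁻¹ : ℝ) : ℂ) * J f g 0 a b := by
  unfold crossWigner1
  congr 1
  rw [J_def]
  refine integral_congr_ae (Filter.Eventually.of_forall fun t => ?_)
  beta_reduce
  unfold Jint
  rw [pow_zero, one_mul, show a/2 + t/2 = (a+t)/2 by ring, show a/2 - t/2 = (a-t)/2 by ring]

lemma rhs_eq (f g : SchwartzMap ℝ ℂ) (x y : ℝ) :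
    crossWigner1 (harmOsc ⇑f) (⇑g) (x/2) (y/2)
      = (((2*π)⁻¹ : ℝ) : ℂ) * (-(J (Df (Df f)) g 0 x y) + ((x:ℂ)^2/4) * J f g 0 x y
        + ((x:ℂ)/2) * J f g 1 x y + (1/4:ℂ) * J f g 2 x y) := by
  have hdd : deriv (deriv (⇑f)) = ⇑(Df (Df f)) := by
    have h1 : deriv (⇑f) = ⇑(Df f) := by
      funext u; exact (SchwartzMap.derivCLM_apply (𝕜 := ℝ) (f := f) (x := u)).symm
    rw [h1]
    funext u; exact (SchwartzMap.derivCLM_apply (𝕜 := ℝ) (f := Df f) (x := u)).symm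
  unfold crossWigner1
  have hint : (fun t : ℝ => Complex.exp (-(Complex.I * ((y/2 : ℝ) : ℂ) * (t:ℂ)))
        * harmOsc (⇑f) (x/2 + t/2) * conj (g (x/2 - t/2)))
      = fun t : ℝ => (-(Jint (Df (Df f)) g 0 x y t) + ((x:ℂ)^2/4) * Jint f g 0 x y t)
        + ((x:ℂ)/2) * Jint f g 1 x y t + (1/4:ℂ) * Jint f g 2 x y t := by
    funext t
    unfold harmOsc Jint
    rw [hdd, show x/2 + t/2 = (x+t)/2 by ring, show x/2 - t/2 = (x-t)/2 by ring]
    push_cast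
    ring
  rw [hint]
  have i2 := Jint_integrable (Df (Df f)) g 0 x y
  have i0 := Jint_integrable f g 0 x y
  have i1 := Jint_integrable f g 1 x y
  have iq := Jint_integrable f g 2 x y
  have hA : Integrable (fun t => -(Jint (Df (Df f)) g 0 x y t)) volume := i2.neg
  have hB : Integrable (fun t => ((x:ℂ)^2/4) * Jint f g 0 x y t) volume := i0.const_mul _
  have hC : Integrable (fun t => ((x:ℂ)/2) * Jint f g 1 x y t) volume := i1.const_mul _
  have hD : Integrable (fun t => (1/4:ℂ) * Jint f g 2 x y t) volume := iq.const_mul _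
  have hAB : Integrable (fun t => -(Jint (Df (Df f)) g 0 x y t)
      + ((x:ℂ)^2/4) * Jint f g 0 x y t) volume := hA.add hB
  have hABC : Integrable (fun t => (-(Jint (Df (Df f)) g 0 x y t)
      + ((x:ℂ)^2/4) * Jint f g 0 x y t) + ((x:ℂ)/2) * Jint f g 1 x y t) volume := hAB.add hC
  rw [integral_add hABC hD, integral_add hAB hC, integral_add hA hB, integral_neg,
    integral_const_mul, integral_const_mul, integral_const_mul, ← J_def, ← J_def, ← J_def, ← J_def]

end Stmt14Aux


end Stmt14AuxSection

open Stmt14Aux Metric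

/-- For Schwartz `φ, θ`, the function `F(x,y) = W(φ,θ)(x/2, y/2)`
satisfies the intertwining identity `(H̃_L F)(x,y) = W(H₀φ, θ)(x/2, y/2)`. -/
theorem stmt14 (φ θ : SchwartzMap ℝ ℂ) (x y : ℝ) :
    landauOp (fun a b => crossWigner1 φ θ (a / 2) (b / 2)) x y
      = crossWigner1 (harmOsc φ) θ (x / 2) (y / 2) := by
  set c : ℂ := (((2*π)⁻¹ : ℝ) : ℂ) with hc
  have hF : (fun a b => crossWigner1 (⇑φ) (⇑θ) (a / 2) (b / 2))
      = fun a b => c * J φ θ 0 a b := by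
    funext a b; exact cw_eq φ θ a b
  rw [hF]
  have hpdx : pdx (fun a b => c * J φ θ 0 a b)
      = fun a b => c * ((1/2:ℂ) * J (Df φ) θ 0 a b + (1/2:ℂ) * J φ (Df θ) 0 a b) := by
    funext a b
    simp only [pdx]
    exact ((hasDerivAt_J_x φ θ 0 a b).const_mul c).deriv
  have hpdy : pdy (fun a b => c * J φ θ 0 a b)
      = fun a b => c * (-(Complex.I/2) * J φ θ 1 a b) := by
    funext a b
    simp only [pdy]
    exact ((hasDerivAt_J_y φ θ 0 a b).const_mul c).deriv
  have hxx : pdx (fun a b => c * ((1/2:ℂ) * J (Df φ) θ 0 a b + (1/2:ℂ) * J φ (Df θ) 0 a b)) x y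
      = c * ((1/2:ℂ) * ((1/2:ℂ) * J (Df (Df φ)) θ 0 x y + (1/2:ℂ) * J (Df φ) (Df θ) 0 x y)
           + (1/2:ℂ) * ((1/2:ℂ) * J (Df φ) (Df θ) 0 x y + (1/2:ℂ) * J φ (Df (Df θ)) 0 x y)) := by
    simp only [pdx]
    exact ((((hasDerivAt_J_x (Df φ) θ 0 x y).const_mul (1/2:ℂ)).add
      ((hasDerivAt_J_x φ (Df θ) 0 x y).const_mul (1/2:ℂ))).const_mul c).deriv
  have hyy : pdy (fun a b => c * (-(Complex.I/2) * J φ θ 1 a b)) x y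
      = c * (-(Complex.I/2) * (-(Complex.I/2) * J φ θ 2 x y)) := by
    simp only [pdy]
    exact (((hasDerivAt_J_y φ θ 1 x y).const_mul (-(Complex.I/2))).const_mul c).deriv
  unfold landauOp
  rw [hpdx, hpdy, hxx, hyy, rhs_eq φ θ x y, ← hc]
  have e1 := key (Df φ) θ x y
  have e2 := key φ (Df θ) x y
  have e3 := key φ θ x y
  push_cast
  linear_combination (-(3:ℂ)/2*c)*e1 + (-(1:ℂ)/2*c)*e2 + (-(Complex.I*(y:ℂ)/2)*c)*e3
    + (c*((y:ℂ)^2/4*(J φ θ 0 x y) - (x:ℂ)/2*(J φ θ 1 x y) - (1:ℂ)/4*(J φ θ 2 x y)))*Complex.I_sq
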